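/- arXiv:2201.03334 — 3 statements merged into one kernel-verified Lean document; each statement's English description precedes it below -/
import Mathlib

section
/- Let X, Y be compact metric spaces with distinguished compact subsets A ⊂ X, B ⊂ Y, and let γ : A → B be an L-biLipschitz homeomorphism (L ≥ 1). Form the quotient space X ⊔ Y / ∼, where x ∼ γ(x) for x ∈ A, equipped with the quotient metric d̂. Then the identity maps (X, d̂|_{X×X}) → (X, d_X) and (Y, d̂|_{Y×Y}) → (Y, d_Y) are L-Lipschitz; in particular d̂|_{X×X} and d̂|_{Y×Y} are L-biLipschitz equivalent to d_X and d_Y respectively. -/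
open Sum

/-- `d̂` is a gluing pseudometric for the gluing of `X` and `Y` along `γ : A → B`:
it is a pseudometric on `X ⊔ Y`, the two inclusions are `1`-Lipschitz, and each point
`a ∈ A` is identified with `γ a`. -/
def IsGluingPseudometric {X Y : Type*} [MetricSpace X] [MetricSpace Y]
    (A : Set X) (γ : X → Y) (d : X ⊕ Y → X ⊕ Y → ℝ) : Prop :=
  (∀ p, d p p = 0) ∧ (∀ p q, d p q = d q p) ∧ (∀ p q s, d p s ≤ d p q + d q s) ∧
    (∀ p q, 0 ≤ d p q) ∧
    (∀ x x' : X, d (inl x) (inl x') ≤ dist x x') ∧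
    (∀ y y' : Y, d (inr y) (inr y') ≤ dist y y') ∧
    (∀ a ∈ A, d (inl a) (inr (γ a)) = 0)

/-- Candidate distance values for the auxiliary gluing pseudometric. -/
def glueCands {U V : Type*} [MetricSpace U] [MetricSpace V]
    (R : Set (U × V)) (L C : ℝ) : U ⊕ V → U ⊕ V → Set ℝ
  | inl u, inl u' => {L⁻¹ * dist u u'}
  | inl u, inr v => insert C {x | ∃ p ∈ R, x = L⁻¹ * dist u p.1 + dist p.2 v}
  | inr v, inl u => insert C {x | ∃ p ∈ R, x = L⁻¹ * dist u p.1 + dist p.2 v}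
  | inr v, inr v' =>
      insert (dist v v')
        {x | ∃ p ∈ R, ∃ q ∈ R, x = dist v p.2 + L⁻¹ * dist p.1 q.1 + dist q.2 v'}

theorem glueCands_nonempty {U V : Type*} [MetricSpace U] [MetricSpace V]
    (R : Set (U × V)) (L C : ℝ) (p q : U ⊕ V) : (glueCands R L C p q).Nonempty := by
  rcases p with u | v <;> rcases q with u' | v'
  · exact ⟨L⁻¹ * dist u u', rfl⟩
  · exact ⟨C, Set.mem_insert _ _⟩
  · exact ⟨C, Set.mem_insert _ _⟩
  · exact ⟨dist v v', Set.mem_insert _ _⟩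

theorem glueCands_nonneg {U V : Type*} [MetricSpace U] [MetricSpace V]
    (R : Set (U × V)) (L C : ℝ) (hLi : (0:ℝ) ≤ L⁻¹) (hC : 0 ≤ C)
    (p q : U ⊕ V) : ∀ x ∈ glueCands R L C p q, 0 ≤ x := by
  rcases p with u | v <;> rcases q with u' | v' <;> intro x hx <;>
    simp only [glueCands, Set.mem_insert_iff, Set.mem_setOf_eq, Set.mem_singleton_iff] at hx
  · subst hx; positivity
  · rcases hx with rfl | ⟨p, _, rfl⟩
    · exact hC
    · positivity
  · rcases hx with rfl | ⟨p, _, rfl⟩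
    · exact hC
    · positivity
  · rcases hx with rfl | ⟨p, _, q, _, rfl⟩
    · positivity
    · positivity

theorem glueCands_symm {U V : Type*} [MetricSpace U] [MetricSpace V]
    (R : Set (U × V)) (L C : ℝ) (p q : U ⊕ V) :
    glueCands R L C p q = glueCands R L C q p := by
  rcases p with u | v <;> rcases q with u' | v'
  · simp [glueCands, dist_comm]
  · rfl
  · rfl
  · simp only [glueCands]
    rw [dist_comm]
    congr 1
    ext x
    constructor
    · rintro ⟨p, hp, q, hq, rfl⟩
      exact ⟨q, hq, p, hp, by rw [dist_comm v p.2, dist_comm q.2 v', dist_comm p.1 q.1]; ring⟩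
    · rintro ⟨p, hp, q, hq, rfl⟩
      exact ⟨q, hq, p, hp, by rw [dist_comm v' p.2, dist_comm q.2 v, dist_comm p.1 q.1]; ring⟩

theorem glue_key {U V : Type*} [MetricSpace U] [MetricSpace V]
    (R : Set (U × V)) (L C : ℝ) (hL : 1 ≤ L) (hC0 : 0 ≤ C)
    (hCU : ∀ u u' : U, L⁻¹ * dist u u' ≤ C)
    (hCV : ∀ v v' : V, dist v v' ≤ C)
    (hbl : ∀ p ∈ R, ∀ q ∈ R, dist p.1 q.1 ≤ L * dist p.2 q.2) :
    ∀ p q s : U ⊕ V, ∀ c1 ∈ glueCands R L C p q, ∀ c2 ∈ glueCands R L C q s,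
      ∃ c ∈ glueCands R L C p s, c ≤ c1 + c2 := by
  have hL0 : (0:ℝ) < L := lt_of_lt_of_le one_pos hL
  have hLi : (0:ℝ) ≤ L⁻¹ := by positivity
  have hbr : ∀ p ∈ R, ∀ q ∈ R, L⁻¹ * dist p.1 q.1 ≤ dist p.2 q.2 := by
    intro p hp q hq
    calc L⁻¹ * dist p.1 q.1 ≤ L⁻¹ * (L * dist p.2 q.2) :=
          mul_le_mul_of_nonneg_left (hbl p hp q hq) hLi
    _ = dist p.2 q.2 := by field_simp
  have htri : ∀ a b c : U, L⁻¹ * dist a c ≤ L⁻¹ * dist a b + L⁻¹ * dist b c := by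
    intro a b c
    have h := dist_triangle a b c
    nlinarith
  have hcomm : ∀ a b : U, L⁻¹ * dist a b = L⁻¹ * dist b a := by
    intro a b; rw [dist_comm]
  intro p q s c1 h1 c2 h2
  have hn1 : 0 ≤ c1 := glueCands_nonneg R L C hLi hC0 _ _ c1 h1
  have hn2 : 0 ≤ c2 := glueCands_nonneg R L C hLi hC0 _ _ c2 h2
  rcases p with u | v <;> rcases q with u' | v' <;> rcases s with u'' | v'' <;>
    simp only [glueCands, Set.mem_insert_iff, Set.mem_setOf_eq,
      Set.mem_singleton_iff] at h1 h2 ⊢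
  · -- lll
    subst h1; subst h2
    exact ⟨_, rfl, htri u u' u''⟩
  · -- llr
    subst h1
    rcases h2 with rfl | ⟨p, hp, rfl⟩
    · exact ⟨_, Or.inl rfl, by linarith⟩
    · exact ⟨_, Or.inr ⟨p, hp, rfl⟩, by have := htri u u' p.1; linarith⟩
  · -- lrl
    refine ⟨_, rfl, ?_⟩
    rcases h1 with rfl | ⟨p, hp, rfl⟩
    · have := hCU u u''; linarith
    rcases h2 with rfl | ⟨q, hq, rfl⟩
    · have := hCU u u''; linarith
    · have t7 : L⁻¹ * dist u u'' ≤ L⁻¹ * dist u p.1 + L⁻¹ * dist p.1 q.1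
          + L⁻¹ * dist q.1 u'' := by
        have h1 := htri u q.1 u''
        have h2 := htri u p.1 q.1
        linarith
      have t3 := hbr p hp q hq
      have t4 := dist_triangle p.2 v' q.2
      have e1 : dist v' q.2 = dist q.2 v' := dist_comm _ _
      have e3 := hcomm q.1 u''
      linarith
  · -- lrr
    rcases h1 with rfl | ⟨p, hp, rfl⟩
    · exact ⟨_, Or.inl rfl, by linarith⟩
    rcases h2 with rfl | ⟨q, hq, r, hr, rfl⟩
    · exact ⟨_, Or.inr ⟨p, hp, rfl⟩, by have := dist_triangle p.2 v' v''; linarith⟩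
    · refine ⟨_, Or.inr ⟨r, hr, rfl⟩, ?_⟩
      have t1 : L⁻¹ * dist u r.1 ≤ L⁻¹ * dist u p.1 + L⁻¹ * dist p.1 q.1
          + L⁻¹ * dist q.1 r.1 := by
        have h1 := htri u p.1 r.1
        have h2 := htri p.1 q.1 r.1
        linarith
      have t3 := hbr p hp q hq
      have t4 := dist_triangle p.2 v' q.2
      have e1 : dist v' q.2 = dist q.2 v' := dist_comm _ _
      linarith
  · -- rll
    subst h2
    rcases h1 with rfl | ⟨p, hp, rfl⟩
    · exact ⟨_, Or.inl rfl, by linarith⟩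
    · refine ⟨_, Or.inr ⟨p, hp, rfl⟩, ?_⟩
      have t1 := htri u'' u' p.1
      have e1 := hcomm u'' u'
      linarith
  · -- rlr
    rcases h1 with rfl | ⟨p, hp, rfl⟩
    · exact ⟨_, Or.inl rfl, by have := hCV v v''; linarith⟩
    rcases h2 with rfl | ⟨q, hq, rfl⟩
    · exact ⟨_, Or.inl rfl, by have := hCV v v''; linarith⟩
    · refine ⟨_, Or.inr ⟨p, hp, q, hq, rfl⟩, ?_⟩
      have t1 := htri p.1 u' q.1
      have e1 : dist v p.2 = dist p.2 v := dist_comm _ _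
      have e2 := hcomm p.1 u'
      linarith
  · -- rrl
    rcases h2 with rfl | ⟨q, hq, rfl⟩
    · exact ⟨_, Or.inl rfl, by linarith⟩
    rcases h1 with rfl | ⟨p, hp, r, hr, rfl⟩
    · refine ⟨_, Or.inr ⟨q, hq, rfl⟩, ?_⟩
      have t1 := dist_triangle q.2 v' v
      have e1 : dist v' v = dist v v' := dist_comm _ _
      linarith
    · refine ⟨_, Or.inr ⟨p, hp, rfl⟩, ?_⟩
      have e0 : dist p.2 v = dist v p.2 := dist_comm _ _
      have t1 : L⁻¹ * dist u'' p.1 ≤ L⁻¹ * dist u'' q.1 + L⁻¹ * dist q.1 r.1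
          + L⁻¹ * dist r.1 p.1 := by
        have h1 := htri u'' q.1 p.1
        have h2 := htri q.1 r.1 p.1
        linarith
      have t2 := hbr r hr q hq
      have t3 := dist_triangle r.2 v' q.2
      have e1 := hcomm r.1 q.1
      have e2 : dist v' q.2 = dist q.2 v' := dist_comm _ _
      have e3 := hcomm r.1 p.1
      have e4 := hcomm u'' q.1
      linarith
  · -- rrr
    rcases h1 with rfl | ⟨p, hp, q, hq, rfl⟩
    · rcases h2 with rfl | ⟨r, hr, s', hs, rfl⟩
      · exact ⟨_, Or.inl rfl, dist_triangle v v' v''⟩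
      · refine ⟨_, Or.inr ⟨r, hr, s', hs, rfl⟩, ?_⟩
        have := dist_triangle v v' r.2
        linarith
    rcases h2 with rfl | ⟨r, hr, s', hs, rfl⟩
    · refine ⟨_, Or.inr ⟨p, hp, q, hq, rfl⟩, ?_⟩
      have := dist_triangle q.2 v' v''
      linarith
    · refine ⟨_, Or.inr ⟨p, hp, s', hs, rfl⟩, ?_⟩
      have t1 : L⁻¹ * dist p.1 s'.1 ≤ L⁻¹ * dist p.1 q.1 + L⁻¹ * dist q.1 r.1
          + L⁻¹ * dist r.1 s'.1 := by
        have h1 := htri p.1 q.1 s'.1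
        have h2 := htri q.1 r.1 s'.1
        linarith
      have t2 := hbr q hq r hr
      have t3 := dist_triangle q.2 v' r.2
      have e1 : dist v' r.2 = dist r.2 v' := dist_comm _ _
      linarith

theorem glue_exists {U V : Type*} [MetricSpace U] [MetricSpace V]
    [CompactSpace U] [CompactSpace V]
    (R : Set (U × V)) (L : ℝ) (hL : 1 ≤ L)
    (hbl : ∀ p ∈ R, ∀ q ∈ R, dist p.1 q.1 ≤ L * dist p.2 q.2) :
    ∃ e : U ⊕ V → U ⊕ V → ℝ,
      (∀ p, e p p = 0) ∧ (∀ p q, e p q = e q p) ∧ (∀ p q s, e p s ≤ e p q + e q s) ∧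
      (∀ p q, 0 ≤ e p q) ∧
      (∀ u u' : U, e (inl u) (inl u') = L⁻¹ * dist u u') ∧
      (∀ v v' : V, e (inr v) (inr v') ≤ dist v v') ∧
      (∀ p ∈ R, e (inl p.1) (inr p.2) = 0) := by
  have hL0 : (0:ℝ) < L := lt_of_lt_of_le one_pos hL
  have hLi : (0:ℝ) ≤ L⁻¹ := by positivity
  have hLi1 : L⁻¹ ≤ 1 := by
    rw [inv_le_one_iff₀]; right; exact hL
  set C : ℝ := Metric.diam (Set.univ : Set U) + Metric.diam (Set.univ : Set V) with hCdef
  have hC0 : 0 ≤ C := add_nonneg Metric.diam_nonneg Metric.diam_nonneg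
  have hCU : ∀ u u' : U, L⁻¹ * dist u u' ≤ C := by
    intro u u'
    have h1 : dist u u' ≤ Metric.diam (Set.univ : Set U) :=
      Metric.dist_le_diam_of_mem isCompact_univ.isBounded (Set.mem_univ _) (Set.mem_univ _)
    nlinarith [dist_nonneg (x := u) (y := u'), Metric.diam_nonneg (s := (Set.univ : Set V))]
  have hCV : ∀ v v' : V, dist v v' ≤ C := by
    intro v v'
    have h1 : dist v v' ≤ Metric.diam (Set.univ : Set V) :=
      Metric.dist_le_diam_of_mem isCompact_univ.isBounded (Set.mem_univ _) (Set.mem_univ _)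
    have := Metric.diam_nonneg (s := (Set.univ : Set U))
    linarith
  have hne : ∀ p q, (glueCands R L C p q).Nonempty := glueCands_nonempty R L C
  have hnn := glueCands_nonneg R L C hLi hC0
  have hbdd : ∀ p q, BddBelow (glueCands R L C p q) := fun p q => ⟨0, fun x hx => hnn p q x hx⟩
  refine ⟨fun p q => sInf (glueCands R L C p q), ?_, ?_, ?_, ?_, ?_, ?_, ?_⟩
  · -- refl
    intro p
    rcases p with u | v
    · simp [glueCands, csInf_singleton]
    · refine le_antisymm ?_ (le_csInf (hne _ _) (fun x hx => hnn _ _ x hx))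
      have hm : dist v v ∈ glueCands R L C (inr v) (inr v) := Set.mem_insert _ _
      have := csInf_le (hbdd _ _) hm
      simpa using this
  · -- symm
    intro p q
    simp only []
    rw [glueCands_symm]
  · -- triangle
    intro p q s
    have key := glue_key R L C hL hC0 hCU hCV hbl p q s
    have h1 : ∀ c1 ∈ glueCands R L C p q,
        sInf (glueCands R L C p s) - c1 ≤ sInf (glueCands R L C q s) := by
      intro c1 hc1
      refine le_csInf (hne q s) (fun c2 hc2 => ?_)
      obtain ⟨c, hc, hle⟩ := key c1 hc1 c2 hc2
      have := csInf_le (hbdd p s) hc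
      linarith
    have h2 : sInf (glueCands R L C p s) - sInf (glueCands R L C q s)
        ≤ sInf (glueCands R L C p q) :=
      le_csInf (hne p q) (fun c1 hc1 => by have := h1 c1 hc1; linarith)
    linarith
  · -- nonneg
    intro p q
    exact le_csInf (hne p q) (fun x hx => hnn p q x hx)
  · -- value on U
    intro u u'
    simp [glueCands, csInf_singleton]
  · -- bound on V
    intro v v'
    exact csInf_le (hbdd _ _) (Set.mem_insert _ _)
  · -- gluing
    intro p hp
    refine le_antisymm ?_ (le_csInf (hne _ _) (fun x hx => hnn _ _ x hx))
    have hm : (0:ℝ) ∈ glueCands R L C (inl p.1) (inr p.2) :=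
      Or.inr ⟨p, hp, by simp⟩
    exact csInf_le (hbdd _ _) hm

/-- Let `X, Y` be compact metric spaces, `A ⊆ X`, `B ⊆ Y` compact, and
`γ : A → B` an `L`-biLipschitz homeomorphism (`L ≥ 1`). Let `d̂` be the quotient
metric on `X ⊔ Y / ∼` (the largest gluing pseudometric). Then the identity maps
`(X, d̂|_X) → (X, d_X)` and `(Y, d̂|_Y) → (Y, d_Y)` are `L`-Lipschitz; since the
other directions are automatically `1`-Lipschitz, `d̂|_X` and `d̂|_Y` are
`L`-biLipschitz equivalent to `d_X` and `d_Y`. -/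
theorem quotient_metric_biLipschitz {X Y : Type*} [MetricSpace X] [MetricSpace Y]
    [CompactSpace X] [CompactSpace Y]
    (A : Set X) (B : Set Y) (hA : IsCompact A) (hB : IsCompact B)
    (L : ℝ) (hL : 1 ≤ L) (γ : X → Y) (hγ : Set.BijOn γ A B)
    (hγbl : ∀ a ∈ A, ∀ a' ∈ A,
      dist a a' ≤ L * dist (γ a) (γ a') ∧ dist (γ a) (γ a') ≤ L * dist a a')
    (dhat : X ⊕ Y → X ⊕ Y → ℝ)
    (hdhat : IsGluingPseudometric A γ dhat)
    (hmax : ∀ d' : X ⊕ Y → X ⊕ Y → ℝ,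
      IsGluingPseudometric A γ d' → ∀ p q, d' p q ≤ dhat p q) :
    (∀ x x' : X, dist x x' ≤ L * dhat (inl x) (inl x')) ∧
      (∀ y y' : Y, dist y y' ≤ L * dhat (inr y) (inr y')) := by
  have hL0 : (0:ℝ) < L := lt_of_lt_of_le one_pos hL
  have hLi : (0:ℝ) ≤ L⁻¹ := by positivity
  have hLi1 : L⁻¹ ≤ 1 := by rw [inv_le_one_iff₀]; right; exact hL
  constructor
  · -- X part
    set R : Set (X × Y) := {p | p.1 ∈ A ∧ p.2 = γ p.1} with hRdef
    have hbl : ∀ p ∈ R, ∀ q ∈ R, dist p.1 q.1 ≤ L * dist p.2 q.2 := by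
      intro p hp q hq
      obtain ⟨ha, hb⟩ := hp
      obtain ⟨ha', hb'⟩ := hq
      rw [hb, hb']
      exact (hγbl p.1 ha q.1 ha').1
    obtain ⟨e, he0, hesymm, hetri, henn, heUU, heVV, heR⟩ := glue_exists R L hL hbl
    have hgp : IsGluingPseudometric A γ e := by
      refine ⟨he0, hesymm, hetri, henn, ?_, heVV, ?_⟩
      · intro x x'
        rw [heUU]
        nlinarith [dist_nonneg (x := x) (y := x')]
      · intro a ha
        exact heR (a, γ a) ⟨ha, rfl⟩
    intro x x'
    have h := hmax e hgp (inl x) (inl x')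
    rw [heUU] at h
    calc dist x x' = L * (L⁻¹ * dist x x') := by field_simp
    _ ≤ L * dhat (inl x) (inl x') := mul_le_mul_of_nonneg_left h (le_of_lt hL0)
  · -- Y part
    set R : Set (Y × X) := {p | p.2 ∈ A ∧ p.1 = γ p.2} with hRdef
    have hbl : ∀ p ∈ R, ∀ q ∈ R, dist p.1 q.1 ≤ L * dist p.2 q.2 := by
      intro p hp q hq
      obtain ⟨ha, hb⟩ := hp
      obtain ⟨ha', hb'⟩ := hq
      rw [hb, hb']
      exact (hγbl p.2 ha q.2 ha').2
    obtain ⟨e, he0, hesymm, hetri, henn, heUU, heVV, heR⟩ := glue_exists R L hL hbl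
    have hgp : IsGluingPseudometric A γ (fun p q => e p.swap q.swap) := by
      refine ⟨fun p => he0 _, fun p q => hesymm _ _, fun p q s => hetri _ _ _,
        fun p q => henn _ _, ?_, ?_, ?_⟩
      · intro x x'
        exact heVV x x'
      · intro y y'
        show e (inl y) (inl y') ≤ dist y y'
        rw [heUU]
        nlinarith [dist_nonneg (x := y) (y := y')]
      · intro a ha
        show e (inr a) (inl (γ a)) = 0
        rw [hesymm]
        exact heR (γ a, a) ⟨ha, rfl⟩
    intro y y'
    have h := hmax _ hgp (inr y) (inr y')
    have h' : L⁻¹ * dist y y' ≤ dhat (inr y) (inr y') := by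
      rw [← heUU y y']; exact h
    calc dist y y' = L * (L⁻¹ * dist y y') := by field_simp
    _ ≤ L * dhat (inr y) (inr y') := mul_le_mul_of_nonneg_left h' (le_of_lt hL0)
end

section
/- Let X be a compact metric space homeomorphic to a closed surface that is not the 2-sphere (e.g. with nontrivial fundamental group or nonempty boundary). Then the infimum η := inf{ℓ(c) : c is a non-contractible closed curve in X} over the lengths of non-contractible rectifiable loops in X is strictly positive, provided X admits at least one rectifiable non-contractible loop and X is a geodesic space which is LLC and Ahlfors 2-regular. -/
open MeasureTheory

/-- Ahlfors 2-regularity with constant `K`. -/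
def Ahlfors2Regular (Z : Type*) [MetricSpace Z] [MeasurableSpace Z] [BorelSpace Z]
    (K : ℝ) : Prop :=
  0 < K ∧ ∀ (z : Z) (r : ℝ), 0 < r → r < Metric.diam (Set.univ : Set Z) →
    ENNReal.ofReal (K⁻¹ * r ^ 2) ≤ μH[2] (Metric.ball z r) ∧
      μH[2] (Metric.ball z r) ≤ ENNReal.ofReal (K * r ^ 2)

/-- Linear local connectedness with constant `λ`. -/
def LLC (Z : Type*) [MetricSpace Z] (lam : ℝ) : Prop :=
  1 ≤ lam ∧ ∀ (z : Z) (r : ℝ), 0 < r →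
    (∀ x ∈ Metric.ball z r, ∀ y ∈ Metric.ball z r,
      ∃ C : Set Z, IsCompact C ∧ IsConnected C ∧ x ∈ C ∧ y ∈ C ∧
        C ⊆ Metric.ball z (lam * r)) ∧
    (∀ x ∉ Metric.ball z r, ∀ y ∉ Metric.ball z r,
      ∃ C : Set Z, IsCompact C ∧ IsConnected C ∧ x ∈ C ∧ y ∈ C ∧
        C ⊆ (Metric.ball z (r / lam))ᶜ)

open unitInterval
noncomputable def comboH (t : unitInterval) (a b : EuclideanHalfSpace 2) :
    EuclideanHalfSpace 2 :=
  ⟨(1 - (t:ℝ)) • a.1 + (t:ℝ) • b.1, by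
    have h0 : (0:ℝ) ≤ 1 - (t:ℝ) := by simpa using t.2.2
    simp only [PiLp.add_apply, PiLp.smul_apply, smul_eq_mul]
    exact add_nonneg (mul_nonneg h0 a.2) (mul_nonneg t.2.1 b.2)⟩

lemma exists_good_nbhd {M : Type*} [TopologicalSpace M]
    [ChartedSpace (EuclideanHalfSpace 2) M] (m : M) :
    ∃ U : Set M, IsOpen U ∧ m ∈ U ∧
      ∀ (y : M) (γ : Path y y), Set.range ⇑γ ⊆ U → γ.Homotopic (Path.refl y) := by
  set φ := chartAt (EuclideanHalfSpace 2) m with hφ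
  have hm : m ∈ φ.source := mem_chart_source _ m
  obtain ⟨O, hO, hOeq⟩ := isOpen_induced_iff.1 φ.open_target
  have hpO : (φ m).1 ∈ O := by
    have : φ m ∈ φ.target := φ.map_source hm
    rw [← hOeq] at this; exact this
  obtain ⟨r, hr, hballO⟩ := Metric.isOpen_iff.1 hO _ hpO
  set W : Set (EuclideanHalfSpace 2) :=
    Subtype.val ⁻¹' Metric.ball ((φ m).1) r with hW
  have hWopen : IsOpen W := continuous_subtype_val.isOpen_preimage _ Metric.isOpen_ball
  have hWsub : W ⊆ φ.target := by
    rw [← hOeq]; exact Set.preimage_mono hballO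
  set U := φ.source ∩ φ ⁻¹' W with hU
  have hUopen : IsOpen U := φ.isOpen_inter_preimage hWopen
  refine ⟨U, hUopen, ⟨hm, Metric.mem_ball_self hr⟩, ?_⟩
  intro y γ hrange
  have hγU : ∀ s : unitInterval, γ s ∈ U := fun s => hrange ⟨s, rfl⟩
  have hy : y ∈ U := by have := hγU 0; rwa [γ.source] at this
  have hcomb : ∀ (t s : unitInterval), comboH t (φ (γ s)) (φ y) ∈ W := by
    intro t s
    have h1 : (φ (γ s)).1 ∈ Metric.ball ((φ m).1) r := (hγU s).2
    have h2 : (φ y).1 ∈ Metric.ball ((φ m).1) r := hy.2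
    exact (convex_ball ((φ m).1) r) h1 h2 (by simpa using t.2.2) t.2.1 (by ring)
  have hinner : Continuous fun ts : I × I => comboH ts.1 (φ (γ ts.2)) (φ y) := by
    apply Continuous.subtype_mk
    have hφγ : Continuous fun s : I => φ (γ s) :=
      φ.continuousOn.comp_continuous γ.continuous (fun s => (hγU s).1)
    have h1 : Continuous fun ts : I × I => ((ts.1 : ℝ)) :=
      continuous_subtype_val.comp continuous_fst
    have h2 : Continuous fun ts : I × I => (φ (γ ts.2)).1 :=
      continuous_subtype_val.comp (hφγ.comp continuous_snd)
    exact ((continuous_const.sub h1).smul h2).add (h1.smul continuous_const)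
  have houter : Continuous fun ts : I × I => φ.symm (comboH ts.1 (φ (γ ts.2)) (φ y)) := by
    apply φ.continuousOn_symm.comp_continuous hinner
    intro ts; exact hWsub (hcomb ts.1 ts.2)
  constructor
  refine ⟨⟨⟨fun ts => φ.symm (comboH ts.1 (φ (γ ts.2)) (φ y)), houter⟩, ?_, ?_⟩, ?_⟩
  · intro s
    show φ.symm (comboH 0 (φ (γ s)) (φ y)) = γ s
    have : comboH 0 (φ (γ s)) (φ y) = φ (γ s) := by apply Subtype.ext; simp [comboH]
    rw [this, φ.left_inv (hγU s).1]
  · intro s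
    show φ.symm (comboH 1 (φ (γ s)) (φ y)) = y
    have : comboH 1 (φ (γ s)) (φ y) = φ y := by apply Subtype.ext; simp [comboH]
    rw [this, φ.left_inv hy.1]
  · intro t s hs
    have hsy : γ s = y := by
      rcases hs with rfl | rfl
      · exact γ.source
      · exact γ.target
    show φ.symm (comboH t (φ (γ s)) (φ y)) = γ s
    have hc : comboH t (φ (γ s)) (φ y) = φ y := by
      rw [hsy]; apply Subtype.ext
      show (1 - (t:ℝ)) • (φ y).1 + (t:ℝ) • (φ y).1 = (φ y).1
      rw [← add_smul]; simp
    rw [hc, φ.left_inv hy.1, hsy]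

open unitInterval

lemma homotopic_of_map_homotopic {X M : Type*} [TopologicalSpace X] [TopologicalSpace M]
    (e : X ≃ₜ M) {y : X} (γ : Path y y)
    (h : (γ.map e.continuous).Homotopic (Path.refl (e y))) :
    γ.Homotopic (Path.refl y) := by
  obtain ⟨F⟩ := h
  constructor
  refine ⟨⟨⟨fun ts => e.symm (F ts), by continuity⟩, ?_, ?_⟩, ?_⟩
  · intro s
    show e.symm (F (0, s)) = γ s
    rw [F.apply_zero]
    show e.symm (e (γ s)) = γ s
    exact e.symm_apply_apply _
  · intro s
    show e.symm (F (1, s)) = y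
    rw [F.apply_one]
    show e.symm (e y) = y
    exact e.symm_apply_apply _
  · intro t s hs
    show e.symm (F (t, s)) = γ s
    rw [F.eq_fst t hs]
    show e.symm (e (γ s)) = γ s
    exact e.symm_apply_apply _



/-- The length of a loop, as the total variation of the underlying map. -/
noncomputable def loopLength {Z : Type*} [MetricSpace Z] {x : Z} (γ : Path x x) : ENNReal :=
  eVariationOn (⇑γ) Set.univ

/-- Let `X` be a compact geodesic metric space which is LLC and Ahlfors 2-regular and
homeomorphic to a (possibly bordered) compact surface `M` not homeomorphic to the
2-sphere. If `X` admits a rectifiable non-contractible loop, then the infimum of the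
lengths of non-contractible loops in `X` is strictly positive. -/
theorem systole_pos {X : Type*} [MetricSpace X] [CompactSpace X]
    [MeasurableSpace X] [BorelSpace X]
    (M : Type*) [TopologicalSpace M] [CompactSpace M] [T2Space M]
    [ChartedSpace (EuclideanHalfSpace 2) M]
    (e : X ≃ₜ M)
    (hns : IsEmpty (M ≃ₜ ↥(Metric.sphere (0 : EuclideanSpace ℝ (Fin 3)) 1)))
    (hgeo : ∀ x y : X, ∃ γ : Path x y,
      eVariationOn (⇑γ) Set.univ = ENNReal.ofReal (dist x y))
    (lam K : ℝ) (hLLC : LLC X lam) (hreg : Ahlfors2Regular X K)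
    (hex : ∃ (x : X) (γ : Path x x), loopLength γ < ⊤ ∧ ¬ γ.Homotopic (Path.refl x)) :
    ∃ η : ENNReal, 0 < η ∧ ∀ (x : X) (γ : Path x x),
      ¬ γ.Homotopic (Path.refl x) → η ≤ loopLength γ := by
  have hA : ∀ x : X, ∃ U : Set X, IsOpen U ∧ x ∈ U ∧
      ∀ (y : X) (γ : Path y y), Set.range ⇑γ ⊆ U → γ.Homotopic (Path.refl y) := by
    intro x
    obtain ⟨V, hVopen, hVmem, hVgood⟩ := exists_good_nbhd (e x)
    refine ⟨e ⁻¹' V, hVopen.preimage e.continuous, hVmem, ?_⟩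
    intro y γ hrange
    apply homotopic_of_map_homotopic e
    apply hVgood
    rintro _ ⟨s, rfl⟩
    exact hrange ⟨s, rfl⟩
  choose U hUopen hUmem hUgood using hA
  obtain ⟨δ, hδ, hball⟩ := lebesgue_number_lemma_of_metric isCompact_univ hUopen
    (fun x _ => Set.mem_iUnion.2 ⟨x, hUmem x⟩)
  refine ⟨ENNReal.ofReal δ, by simpa using hδ, ?_⟩
  intro x γ hγ
  by_contra hlt
  push_neg at hlt
  obtain ⟨i, hi⟩ := hball x (Set.mem_univ x)
  apply hγ
  apply hUgood i x γ
  rintro _ ⟨s, rfl⟩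
  apply hi
  rw [Metric.mem_ball]
  have h1 : edist (γ s) (γ 0) ≤ loopLength γ :=
    eVariationOn.edist_le _ (Set.mem_univ _) (Set.mem_univ _)
  have h2 : edist (γ s) x < ENNReal.ofReal δ := by
    have := lt_of_le_of_lt h1 hlt
    rwa [γ.source] at this
  exact (edist_lt_ofReal).1 h2
end

section
/- Let X be a geodesic metric surface and η : S¹ → X, c : [0,s] → X be, respectively, a unit-speed biLipschitz curve and a unit-speed geodesic with common endpoint y = η(0) = c(0), such that c realizes the distance from its other endpoint x to the image of η, i.e. d(x, |η|) = d(x, y) = s. Then for all r ∈ [0,s], d(η(−r), c(r)) ≥ r; consequently the concatenation of η|_{[−s,0]} and c|_{[0,s]} is a biLipschitz curve with biLipschitz constant depending only on that of η. -/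
/-- Let `X` be a geodesic metric space, `η` a unit-speed `L`-biLipschitz curve on
`[-s, 0]` and `c` a unit-speed geodesic on `[0, s]` with common endpoint
`y = η 0 = c 0`, such that `c` realizes the distance from its other endpoint
`x = c s` to the image of `η`, i.e. `d(x, |η|) = d(x,y) = s`. Then
`d(η(-r), c(r)) ≥ r` for all `r ∈ [0,s]`, and the concatenation of `η|_{[-s,0]}`
and `c|_{[0,s]}` is a biLipschitz curve with constant depending only on `L`. -/
theorem geodesic_concatenation_biLipschitz :
    ∀ L : ℝ, 1 ≤ L → ∃ L' : ℝ, 1 ≤ L' ∧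
      ∀ (X : Type) [MetricSpace X],
        (∀ a b : X, ∃ γ : ℝ → X, γ 0 = a ∧ γ (dist a b) = b ∧
          ∀ t₁ ∈ Set.Icc 0 (dist a b), ∀ t₂ ∈ Set.Icc 0 (dist a b),
            dist (γ t₁) (γ t₂) = |t₁ - t₂|) →
        ∀ (x y : X) (s : ℝ), 0 < s → ∀ (η c : ℝ → X),
          η 0 = y → c 0 = y → c s = x →
          (∀ t₁ ∈ Set.Icc (-s) (0 : ℝ), ∀ t₂ ∈ Set.Icc (-s) (0 : ℝ),
            dist (η t₁) (η t₂) ≤ |t₁ - t₂| ∧ |t₁ - t₂| ≤ L * dist (η t₁) (η t₂)) →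
          (∀ t₁ ∈ Set.Icc (0 : ℝ) s, ∀ t₂ ∈ Set.Icc (0 : ℝ) s,
            dist (c t₁) (c t₂) = |t₁ - t₂|) →
          dist x y = s →
          (∀ t ∈ Set.Icc (-s) (0 : ℝ), s ≤ dist x (η t)) →
          (∀ r ∈ Set.Icc (0 : ℝ) s, r ≤ dist (η (-r)) (c r)) ∧
            (∀ t₁ ∈ Set.Icc (-s) s, ∀ t₂ ∈ Set.Icc (-s) s,
              dist ((fun t => if t ≤ 0 then η t else c t) t₁)
                  ((fun t => if t ≤ 0 then η t else c t) t₂) ≤ |t₁ - t₂| ∧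
                |t₁ - t₂| ≤
                  L' * dist ((fun t => if t ≤ 0 then η t else c t) t₁)
                    ((fun t => if t ≤ 0 then η t else c t) t₂)) := by
  intro L hL
  refine ⟨3 * L, by linarith, ?_⟩
  intro X _ _hgeo x y s hs η c hη0 hc0 hcs hηbl hc hxy hfar
  -- For a, b ∈ [0, s] : b ≤ dist (η (-a)) (c b)
  have key : ∀ a ∈ Set.Icc (0:ℝ) s, ∀ b ∈ Set.Icc (0:ℝ) s,
      b ≤ dist (η (-a)) (c b) := by
    intro a ha b hb
    have h1 : dist x (c b) = s - b := by
      have h := hc s ⟨hs.le, le_refl s⟩ b hb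
      rw [hcs] at h
      rw [h, abs_of_nonneg (by linarith [hb.2])]
    have h2 : s ≤ dist x (η (-a)) :=
      hfar (-a) ⟨by linarith [ha.2], by linarith [ha.1]⟩
    have h3 := dist_triangle x (c b) (η (-a))
    have h4 := dist_comm (c b) (η (-a))
    linarith
  have hub : ∀ a ∈ Set.Icc (0:ℝ) s, ∀ b ∈ Set.Icc (0:ℝ) s,
      dist (η (-a)) (c b) ≤ a + b := by
    intro a ha b hb
    have h1 := (hηbl (-a) ⟨by linarith [ha.2], by linarith [ha.1]⟩ 0
      ⟨by linarith, le_refl 0⟩).1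
    rw [sub_zero, abs_neg, abs_of_nonneg ha.1] at h1
    have h2 := hc 0 ⟨le_refl 0, hs.le⟩ b hb
    rw [zero_sub, abs_neg, abs_of_nonneg hb.1] at h2
    have heq : η 0 = c 0 := by rw [hη0, hc0]
    rw [heq] at h1
    have h3 := dist_triangle (η (-a)) (c 0) (c b)
    linarith
  have hlb : ∀ a ∈ Set.Icc (0:ℝ) s, ∀ b ∈ Set.Icc (0:ℝ) s,
      a ≤ L * (dist (η (-a)) (c b) + b) := by
    intro a ha b hb
    have h1 := (hηbl (-a) ⟨by linarith [ha.2], by linarith [ha.1]⟩ 0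
      ⟨by linarith, le_refl 0⟩).2
    rw [sub_zero, abs_neg, abs_of_nonneg ha.1] at h1
    have h2 := hc b hb 0 ⟨le_refl 0, hs.le⟩
    rw [sub_zero, abs_of_nonneg hb.1] at h2
    have heq : η 0 = c 0 := by rw [hη0, hc0]
    rw [heq] at h1
    have h3 := dist_triangle (η (-a)) (c b) (c 0)
    have h4 : L * dist (η (-a)) (c 0) ≤ L * (dist (η (-a)) (c b) + b) := by
      apply mul_le_mul_of_nonneg_left _ (by linarith)
      linarith
    linarith
  -- main mixed estimate
  have mixed : ∀ a ∈ Set.Icc (0:ℝ) s, ∀ b ∈ Set.Icc (0:ℝ) s,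
      dist (η (-a)) (c b) ≤ a + b ∧ a + b ≤ 3 * L * dist (η (-a)) (c b) := by
    intro a ha b hb
    refine ⟨hub a ha b hb, ?_⟩
    have h1 := key a ha b hb
    have h2 := hlb a ha b hb
    have hd : (0:ℝ) ≤ dist (η (-a)) (c b) := dist_nonneg
    nlinarith [ha.1, hb.1]
  constructor
  · intro r hr
    exact key r hr r hr
  · intro t₁ ht₁ t₂ ht₂
    by_cases h1 : t₁ ≤ 0 <;> by_cases h2 : t₂ ≤ 0 <;> simp only [h1, h2, if_pos, if_neg, if_true, if_false]
    · exact ⟨(hηbl t₁ ⟨ht₁.1, h1⟩ t₂ ⟨ht₂.1, h2⟩).1,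
        le_trans (hηbl t₁ ⟨ht₁.1, h1⟩ t₂ ⟨ht₂.1, h2⟩).2
          (by nlinarith [@dist_nonneg _ _ (η t₁) (η t₂)])⟩
    · -- t₁ ≤ 0 < t₂
      push_neg at h2
      have := mixed (-t₁) ⟨by linarith, by linarith [ht₁.1]⟩ t₂ ⟨h2.le, ht₂.2⟩
      rw [neg_neg] at this
      have habs : |t₁ - t₂| = -t₁ + t₂ := by rw [abs_of_nonpos (by linarith)]; ring
      rw [habs]
      exact this
    · -- t₂ ≤ 0 < t₁
      push_neg at h1
      have := mixed (-t₂) ⟨by linarith, by linarith [ht₂.1]⟩ t₁ ⟨h1.le, ht₁.2⟩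
      rw [neg_neg] at this
      have habs : |t₁ - t₂| = -t₂ + t₁ := by rw [abs_of_nonneg (by linarith)]; ring
      rw [habs, dist_comm]
      exact this
    · push_neg at h1 h2
      have h := hc t₁ ⟨h1.le, ht₁.2⟩ t₂ ⟨h2.le, ht₂.2⟩
      rw [h]
      exact ⟨le_refl _, by nlinarith [abs_nonneg (t₁ - t₂)]⟩
end
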